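/- Let n ≥ 1 and let x ∈ ℝⁿ satisfy 0 ≤ x_1 ≤ x_2 ≤ ⋯ ≤ x_n ≤ 1 and Σ_{i=1}^n x_i = 1. Then Σ_{i=1}^n 1/√(x_i + x_{i+1} + ⋯ + x_n) ≤ 2n. -/

import Mathlib

open Finset

lemma sqrt_term_bound (k : ℕ) : 1 / Real.sqrt (k+1) ≤ 2 * (Real.sqrt (k+1) - Real.sqrt k) := by
  have h1 : (0:ℝ) ≤ (k:ℝ) := Nat.cast_nonneg k
  have h2 : (0:ℝ) < (k:ℝ) + 1 := by positivity
  have hs : Real.sqrt k ≤ Real.sqrt (k+1) := Real.sqrt_le_sqrt (by linarith)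
  have hsp : 0 < Real.sqrt ((k:ℝ)+1) := Real.sqrt_pos.mpr h2
  have key : (Real.sqrt (k+1) - Real.sqrt k) * (Real.sqrt (k+1) + Real.sqrt k) = 1 := by
    have a := Real.sq_sqrt h2.le
    have b := Real.sq_sqrt h1
    nlinarith [a, b]
  have hle : Real.sqrt (k+1) + Real.sqrt k ≤ 2 * Real.sqrt (k+1) := by linarith
  have hpos : 0 ≤ Real.sqrt ((k:ℝ)+1) - Real.sqrt k := by linarith
  have : 1 ≤ (Real.sqrt (k+1) - Real.sqrt k) * (2 * Real.sqrt (k+1)) := by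
    nlinarith
  rw [div_le_iff₀ hsp]
  nlinarith

lemma sqrt_sum_bound (n : ℕ) : ∑ k ∈ range n, 1 / Real.sqrt (k+1) ≤ 2 * Real.sqrt n := by
  calc ∑ k ∈ range n, 1 / Real.sqrt (k+1)
      ≤ ∑ k ∈ range n, 2 * (Real.sqrt (k+1) - Real.sqrt k) :=
        Finset.sum_le_sum fun k _ => sqrt_term_bound k
    _ = 2 * Real.sqrt n := by
        rw [← Finset.mul_sum]
        congr 1
        have := Finset.sum_range_sub (fun k : ℕ => Real.sqrt k) n
        simpa using this

lemma tail_bound {n : ℕ} (x : Fin n → ℝ) (h0 : ∀ i, 0 ≤ x i) (hmono : Monotone x)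
    (hsum : ∑ i, x i = 1) (i : Fin n) :
    ((n - i.val : ℕ) : ℝ) / n ≤ ∑ j ∈ Finset.Ici i, x j := by
  have hn : 0 < n := i.pos
  set T := ∑ j ∈ Finset.Ici i, x j with hT
  set H := ∑ j ∈ Finset.Iio i, x j with hH
  have hsplit : H + T = 1 := by
    have hu : Finset.Iio i ∪ Finset.Ici i = Finset.univ := by
      ext j; simp [lt_or_ge]
    rw [hH, hT, ← Finset.sum_union]
    · rw [hu]; exact hsum
    · exact Finset.disjoint_left.mpr fun a ha hb => absurd (Finset.mem_Ici.mp hb) (not_le.mpr (Finset.mem_Iio.mp ha))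
  have hcardI : (Finset.Ici i).card = n - i.val := Fin.card_Ici i
  have hcardH : (Finset.Iio i).card = i.val := Fin.card_Iio i
  have hTge : ((n - i.val : ℕ) : ℝ) * x i ≤ T := by
    calc ((n - i.val : ℕ) : ℝ) * x i = ∑ _j ∈ Finset.Ici i, x i := by
          rw [Finset.sum_const, hcardI, nsmul_eq_mul]
      _ ≤ T := Finset.sum_le_sum fun j hj => hmono (Finset.mem_Ici.mp hj)
  have hHle : H ≤ (i.val : ℝ) * x i := by
    calc H ≤ ∑ _j ∈ Finset.Iio i, x i :=
          Finset.sum_le_sum fun j hj => hmono (le_of_lt (Finset.mem_Iio.mp hj))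
      _ = (i.val : ℝ) * x i := by rw [Finset.sum_const, hcardH, nsmul_eq_mul]
  have hm : ((n - i.val : ℕ) : ℝ) = (n : ℝ) - i.val := by
    have := i.isLt; push_cast [Nat.cast_sub (le_of_lt this)]; ring
  rw [div_le_iff₀ (by exact_mod_cast hn)]
  have hxnn : 0 ≤ x i := h0 i
  have hTnn : 0 ≤ T := Finset.sum_nonneg fun j _ => h0 j
  have hiv : (0:ℝ) ≤ (i.val : ℝ) := Nat.cast_nonneg _
  nlinarith [hTge, hHle, hsplit, mul_le_mul_of_nonneg_left hTge hiv]

/-- The elementary inequality on sums of reciprocal square roots of tail sums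
(Lemma `sumpi` of the paper). -/
theorem stmt_3 (n : ℕ) (hn : 1 ≤ n) (x : Fin n → ℝ)
    (h0 : ∀ i, 0 ≤ x i) (hmono : Monotone x) (h1 : ∀ i, x i ≤ 1)
    (hsum : ∑ i, x i = 1) :
    ∑ i, 1 / Real.sqrt (∑ j ∈ Finset.Ici i, x j) ≤ 2 * n := by
  have hnp : (0:ℝ) < n := by exact_mod_cast hn
  have key : ∀ i : Fin n, 1 / Real.sqrt (∑ j ∈ Finset.Ici i, x j) ≤
      Real.sqrt n / Real.sqrt ((n - i.val : ℕ) : ℝ) := by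
    intro i
    have hmn : 1 ≤ n - i.val := by have := i.isLt; omega
    have hmp : (0:ℝ) < ((n - i.val : ℕ) : ℝ) := by exact_mod_cast hmn
    have hT := tail_bound x h0 hmono hsum i
    have hTp : 0 < ∑ j ∈ Finset.Ici i, x j := lt_of_lt_of_le (div_pos hmp hnp) hT
    have h1' : ((n - i.val : ℕ) : ℝ) ≤ n * ∑ j ∈ Finset.Ici i, x j := by
      rw [div_le_iff₀ hnp] at hT; linarith
    have hsq : Real.sqrt ((n - i.val : ℕ) : ℝ) ≤
        Real.sqrt n * Real.sqrt (∑ j ∈ Finset.Ici i, x j) := by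
      rw [← Real.sqrt_mul hnp.le]
      exact Real.sqrt_le_sqrt h1'
    rw [div_le_div_iff₀ (Real.sqrt_pos.mpr hTp) (Real.sqrt_pos.mpr hmp)]
    simpa using hsq
  calc ∑ i, 1 / Real.sqrt (∑ j ∈ Finset.Ici i, x j)
      ≤ ∑ i : Fin n, Real.sqrt n / Real.sqrt ((n - i.val : ℕ) : ℝ) :=
        Finset.sum_le_sum fun i _ => key i
    _ = Real.sqrt n * ∑ k ∈ range n, 1 / Real.sqrt ((n - k : ℕ) : ℝ) := by
        rw [Finset.mul_sum, Fin.sum_univ_eq_sum_range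
          (fun k => Real.sqrt n / Real.sqrt ((n - k : ℕ) : ℝ))]
        exact Finset.sum_congr rfl fun k _ => by rw [div_eq_mul_one_div]
    _ = Real.sqrt n * ∑ j ∈ range n, 1 / Real.sqrt (j+1) := by
        congr 1
        rw [← Finset.sum_range_reflect]
        refine Finset.sum_congr rfl fun j hj => ?_
        rw [Finset.mem_range] at hj
        have h2 : n - (n - 1 - j) = j + 1 := by omega
        rw [h2]
        norm_num
    _ ≤ Real.sqrt n * (2 * Real.sqrt n) := by
        have := sqrt_sum_bound n
        exact mul_le_mul_of_nonneg_left this (Real.sqrt_nonneg n)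
    _ = 2 * n := by
        have := Real.mul_self_sqrt hnp.le
        nlinarith [this]
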